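/- Let n be a finite type, let X be a positive semidefinite matrix in Matrix n n ℂ, and let P be an orthogonal projection such that (1 − P) * X * (1 − P) − (1 − P) is positive semidefinite (i.e., P is a pruning projector for X with respect to the identity: X ≥ 1 on the range of 1 − P). Then Re Tr(1 − P) ≤ Re Tr X. -/

import Mathlib

open Matrix
open scoped ComplexOrder

/-- Pointwise form of Lemma 3 of the paper: if `P` is a pruning projector for a
positive semidefinite matrix `X` with respect to the identity (that is, `X ≥ 1` on
the range of `1 - P`), then `Tr(1 - P) ≤ Tr X`. -/
theorem pruning_trace_le
    {n : Type*} [Fintype n] [DecidableEq n]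
    (X : Matrix n n ℂ) (hX : X.PosSemidef)
    (P : Matrix n n ℂ) (hP : Pᴴ = P ∧ P * P = P)
    (hprune : (((1 : Matrix n n ℂ) - P) * X * ((1 : Matrix n n ℂ) - P) -
        ((1 : Matrix n n ℂ) - P)).PosSemidef) :
    (((1 : Matrix n n ℂ) - P).trace).re ≤ (X.trace).re := by
  set Q : Matrix n n ℂ := (1 : Matrix n n ℂ) - P with hQdef
  have hQQ : Q * Q = Q := by
    simp only [hQdef, sub_mul, mul_sub, one_mul, mul_one, hP.2]
    abel
  have key : ∀ A : Matrix n n ℂ, A.PosSemidef → 0 ≤ (A.trace).re := by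
    intro A hA
    have hdiag : ∀ i, 0 ≤ (A i i).re := by
      intro i
      have h := hA.diag_nonneg (i := i)
      exact (Complex.le_def.mp h).1
    rw [Matrix.trace, Complex.re_sum]
    exact Finset.sum_nonneg fun i _ => hdiag i
  -- Tr(QXQ - Q) ≥ 0
  have h1 : 0 ≤ ((Q * X * Q - Q).trace).re := key _ hprune
  -- Tr(PXP) ≥ 0
  have hPXP : (P * X * P).PosSemidef := by
    have := hX.mul_mul_conjTranspose_same P
    rwa [hP.1] at this
  have h2 : 0 ≤ ((P * X * P).trace).re := key _ hPXP
  have t1 : (Q * X * Q).trace = (X * Q).trace := by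
    rw [trace_mul_cycle, hQQ, trace_mul_comm]
  have t2 : (P * X * P).trace = (X * P).trace := by
    rw [trace_mul_cycle, hP.2, trace_mul_comm]
  have t3 : (X * Q).trace + (X * P).trace = X.trace := by
    rw [← trace_add, ← mul_add, hQdef]
    simp
  rw [trace_sub, t1] at h1
  rw [t2] at h2
  have := Complex.add_re ((X * Q).trace) ((X * P).trace)
  rw [t3] at this
  simp only [Complex.sub_re] at h1
  linarith
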